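/- Suppose U additionally satisfies the reasonable asymptotic elasticity conditions limsup_{x→+∞} x·U'(x)/U(x) < 1 and liminf_{x→−∞} x·U'(x)/U(x) > 1. Let (Ω, F, P) be a probability space and ρ a random variable with ρ > 0 almost surely, E_P[ρ] = 1, and E_P[Ũ(ρ)] < ∞. Then for every y > 0 one has E_P[Ũ(y·ρ)] < ∞. -/

import Mathlib

open Filter Set MeasureTheory

/-- The convex conjugate `Ũ(y) = sup_{x ∈ ℝ} (U(x) − x·y)`. -/
noncomputable def Utilde (U : ℝ → ℝ) (y : ℝ) : ℝ := ⨆ x : ℝ, (U x - x * y)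

namespace DualIntAux

variable {U : ℝ → ℝ}

/-- Tangent line bound for concave differentiable functions. -/
lemma tangent_le (hc : ConcaveOn ℝ Set.univ U) (hd : ∀ x : ℝ, DifferentiableAt ℝ U x)
    (a x : ℝ) : U x ≤ U a + deriv U a * (x - a) := by
  rcases lt_trichotomy x a with h | rfl | h
  · have h1 := hc.deriv_le_slope (mem_univ x) (mem_univ a) h (hd a)
    rw [slope_def_field] at h1
    have hxa : (0:ℝ) < a - x := by linarith
    rw [le_div_iff₀ hxa] at h1
    nlinarith
  · simp
  · have h1 := hc.slope_le_deriv (mem_univ a) (mem_univ x) h (hd a)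
    rw [slope_def_field] at h1
    have hxa : (0:ℝ) < x - a := by linarith
    rw [div_le_iff₀ hxa] at h1
    nlinarith

lemma deriv_pos (hU_concave : StrictConcaveOn ℝ Set.univ U)
    (hd : ∀ x : ℝ, DifferentiableAt ℝ U x)
    (hInada_top : Tendsto (deriv U) atTop (nhds 0)) : ∀ x : ℝ, 0 < deriv U x := by
  have hanti : StrictAntiOn (deriv U) Set.univ :=
    hU_concave.strictAntiOn_deriv (fun x _ => hd x)
  intro x
  have h1 : (0:ℝ) ≤ deriv U (x + 1) := by
    refine le_of_tendsto hInada_top ?_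
    filter_upwards [eventually_ge_atTop (x + 1)] with w hw
    rcases eq_or_lt_of_le hw with rfl | hw'
    · exact le_refl _
    · exact le_of_lt (hanti (mem_univ _) (mem_univ _) hw')
  have h2 : deriv U (x + 1) < deriv U x := hanti (mem_univ x) (mem_univ _) (by linarith)
  linarith

lemma bddAbove_conj (hc : ConcaveOn ℝ Set.univ U) (hd : ∀ x : ℝ, DifferentiableAt ℝ U x)
    (hInada_top : Tendsto (deriv U) atTop (nhds 0))
    (hInada_bot : Tendsto (deriv U) atBot atTop) {z : ℝ} (hz : 0 < z) :
    BddAbove (Set.range fun x => U x - x * z) := by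
  obtain ⟨a₁, ha₁⟩ : ∃ a, deriv U a < z :=
    (hInada_top.eventually_lt_const hz).exists
  obtain ⟨a₂, ha₂⟩ : ∃ a, z < deriv U a := (hInada_bot.eventually_gt_atTop z).exists
  refine ⟨max (U a₁ - deriv U a₁ * a₁) (U a₂ - deriv U a₂ * a₂), ?_⟩
  rintro _ ⟨x, rfl⟩
  rcases le_total 0 x with hx | hx
  · have ht := tangent_le hc hd a₁ x
    have : U x - x * z ≤ U a₁ - deriv U a₁ * a₁ := by nlinarith
    exact this.trans (le_max_left _ _)
  · have ht := tangent_le hc hd a₂ x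
    have : U x - x * z ≤ U a₂ - deriv U a₂ * a₂ := by nlinarith
    exact this.trans (le_max_right _ _)

lemma le_Utilde (hc : ConcaveOn ℝ Set.univ U) (hd : ∀ x : ℝ, DifferentiableAt ℝ U x)
    (hInada_top : Tendsto (deriv U) atTop (nhds 0))
    (hInada_bot : Tendsto (deriv U) atBot atTop) {z : ℝ} (hz : 0 < z) (x : ℝ) :
    U x - x * z ≤ Utilde U z :=
  le_ciSup (bddAbove_conj hc hd hInada_top hInada_bot hz) x

lemma U0_le_Utilde (hc : ConcaveOn ℝ Set.univ U) (hd : ∀ x : ℝ, DifferentiableAt ℝ U x)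
    (hInada_top : Tendsto (deriv U) atTop (nhds 0))
    (hInada_bot : Tendsto (deriv U) atBot atTop) {z : ℝ} (hz : 0 < z) :
    U 0 ≤ Utilde U z := by
  have := le_Utilde hc hd hInada_top hInada_bot hz 0
  simpa using this

lemma Utilde_rat (hcont : Continuous U) (hc : ConcaveOn ℝ Set.univ U)
    (hd : ∀ x : ℝ, DifferentiableAt ℝ U x)
    (hInada_top : Tendsto (deriv U) atTop (nhds 0))
    (hInada_bot : Tendsto (deriv U) atBot atTop) {z : ℝ} (hz : 0 < z) :
    Utilde U z = ⨆ q : ℚ, (U q - q * z) := by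
  have hbdd := bddAbove_conj hc hd hInada_top hInada_bot hz
  have hbddQ : BddAbove (Set.range fun q : ℚ => U q - q * z) := by
    refine hbdd.mono ?_
    rintro _ ⟨q, rfl⟩
    exact ⟨(q : ℝ), rfl⟩
  refine le_antisymm ?_ (ciSup_le fun q => le_Utilde hc hd hInada_top hInada_bot hz q)
  refine ciSup_le fun x => ?_
  refine le_of_forall_lt fun c hc' => ?_
  have hopen : IsOpen {t : ℝ | c < U t - t * z} :=
    isOpen_lt continuous_const (by continuity)
  obtain ⟨q, hq⟩ := Rat.denseRange_cast.exists_mem_open hopen ⟨x, hc'⟩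
  exact lt_of_lt_of_le hq (le_ciSup hbddQ q)

lemma scale_top (hd : ∀ x : ℝ, HasDerivAt U (deriv U x) x) (hcont : Continuous U)
    {γ x₀ : ℝ} (hγ : 0 < γ) (hx₀ : 0 < x₀)
    (hpos : ∀ w, x₀ ≤ w → 0 < U w)
    (hratio : ∀ w, x₀ ≤ w → w * deriv U w < γ * U w) :
    ∀ x, x₀ ≤ x → ∀ t, 0 ≤ t → U (Real.exp t * x) ≤ Real.exp (γ * t) * U x := by
  intro x hx t ht
  have hxpos : 0 < x := lt_of_lt_of_le hx₀ hx
  have key : ∀ u : ℝ, 0 ≤ u → x₀ ≤ Real.exp u * x := fun u hu =>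
    le_trans hx (le_mul_of_one_le_left hxpos.le (Real.one_le_exp hu))
  set F : ℝ → ℝ := fun u => Real.log (U (Real.exp u * x)) - γ * u with hF
  have hG : ∀ u : ℝ, HasDerivAt (fun u => U (Real.exp u * x))
      (deriv U (Real.exp u * x) * (Real.exp u * x)) u := by
    intro u
    have h1 : HasDerivAt (fun u : ℝ => Real.exp u * x) (Real.exp u * x) u :=
      (Real.hasDerivAt_exp u).mul_const x
    exact (hd _).comp u h1
  have hFd : ∀ u : ℝ, 0 ≤ u → HasDerivAt F
      (deriv U (Real.exp u * x) * (Real.exp u * x) / U (Real.exp u * x) - γ) u := by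
    intro u hu
    have h1 := ((hG u).log (ne_of_gt (hpos _ (key u hu)))).sub
      ((hasDerivAt_id u).const_mul γ)
    rw [mul_one] at h1
    exact h1
  have anti : AntitoneOn F (Set.Ici (0:ℝ)) := by
    refine antitoneOn_of_deriv_nonpos (convex_Ici 0) ?_ ?_ ?_
    · intro u hu
      exact ((hFd u hu).continuousAt).continuousWithinAt
    · intro u hu
      rw [interior_Ici] at hu
      exact (hFd u (le_of_lt hu)).differentiableAt.differentiableWithinAt
    · intro u hu
      rw [interior_Ici] at hu
      rw [(hFd u (le_of_lt hu)).deriv]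
      have hw := key u (le_of_lt hu)
      have h1 := hratio _ hw
      have h2 := hpos _ hw
      have h3 : deriv U (Real.exp u * x) * (Real.exp u * x) / U (Real.exp u * x) < γ := by
        rw [div_lt_iff₀ h2]
        nlinarith
      linarith
  have hFt : F t ≤ F 0 := anti Set.self_mem_Ici (Set.mem_Ici.mpr ht) ht
  have h1 : 0 < U (Real.exp t * x) := hpos _ (key t ht)
  have h2 : 0 < Real.exp (γ * t) * U x := mul_pos (Real.exp_pos _) (hpos _ hx)
  rw [← Real.log_le_log_iff h1 h2, Real.log_mul (ne_of_gt (Real.exp_pos _))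
    (ne_of_gt (hpos _ hx)), Real.log_exp]
  simp only [hF] at hFt
  simp only [Real.exp_zero, one_mul, mul_zero, sub_zero] at hFt
  linarith

lemma scale_bot (hd : ∀ x : ℝ, HasDerivAt U (deriv U x) x)
    {γ x₁ : ℝ} (hx₁ : x₁ < 0)
    (hneg : ∀ w, w ≤ x₁ → U w < 0)
    (hratio : ∀ w, w ≤ x₁ → w * deriv U w < γ * U w) :
    ∀ x, x ≤ x₁ → ∀ t, 0 ≤ t → U (Real.exp t * x) ≤ Real.exp (γ * t) * U x := by
  intro x hx t ht
  have hxneg : x < 0 := lt_of_le_of_lt hx hx₁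
  have key : ∀ u : ℝ, 0 ≤ u → Real.exp u * x ≤ x₁ := by
    intro u hu
    have h1 : Real.exp u * x ≤ 1 * x := by
      apply mul_le_mul_of_nonpos_right (Real.one_le_exp hu) hxneg.le
    linarith [hx]
  set G : ℝ → ℝ := fun u => Real.log (-U (Real.exp u * x)) - γ * u with hG'
  have hG : ∀ u : ℝ, HasDerivAt (fun u => U (Real.exp u * x))
      (deriv U (Real.exp u * x) * (Real.exp u * x)) u := by
    intro u
    have h1 : HasDerivAt (fun u : ℝ => Real.exp u * x) (Real.exp u * x) u :=
      (Real.hasDerivAt_exp u).mul_const x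
    exact (hd _).comp u h1
  have hGd : ∀ u : ℝ, 0 ≤ u → HasDerivAt G
      (deriv U (Real.exp u * x) * (Real.exp u * x) / U (Real.exp u * x) - γ) u := by
    intro u hu
    have hne : -U (Real.exp u * x) ≠ 0 := by
      have := hneg _ (key u hu); intro h; rw [neg_eq_zero] at h; linarith
    have h1 := (((hG u).neg).log hne).sub ((hasDerivAt_id u).const_mul γ)
    have heq : -(deriv U (Real.exp u * x) * (Real.exp u * x)) / -U (Real.exp u * x)
        = deriv U (Real.exp u * x) * (Real.exp u * x) / U (Real.exp u * x) := by
      rw [neg_div_neg_eq]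
    rw [show (-fun u => U (Real.exp u * x)) u = -U (Real.exp u * x) from rfl, heq, mul_one] at h1
    exact h1
  have mono : MonotoneOn G (Set.Ici (0:ℝ)) := by
    refine monotoneOn_of_deriv_nonneg (convex_Ici 0) ?_ ?_ ?_
    · intro u hu
      exact ((hGd u hu).continuousAt).continuousWithinAt
    · intro u hu
      rw [interior_Ici] at hu
      exact (hGd u (le_of_lt hu)).differentiableAt.differentiableWithinAt
    · intro u hu
      rw [interior_Ici] at hu
      rw [(hGd u (le_of_lt hu)).deriv]
      have hw := key u (le_of_lt hu)
      have h1 := hratio _ hw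
      have h2 := hneg _ hw
      have h3 : γ < deriv U (Real.exp u * x) * (Real.exp u * x) / U (Real.exp u * x) := by
        rw [lt_div_iff_of_neg h2]
        nlinarith
      linarith
  have hGt : G 0 ≤ G t := mono Set.self_mem_Ici (Set.mem_Ici.mpr ht) ht
  have h1 : 0 < -U (Real.exp t * x) := by linarith [hneg _ (key t ht)]
  have hUxneg : U x < 0 := hneg _ hx
  have h2 : 0 < Real.exp (γ * t) * -U x :=
    mul_pos (Real.exp_pos _) (by linarith)
  have h3 : Real.exp (γ * t) * -U x ≤ -U (Real.exp t * x) := by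
    rw [← Real.log_le_log_iff h2 h1, Real.log_mul (ne_of_gt (Real.exp_pos _))
      (ne_of_gt (by linarith : (0:ℝ) < -U x)), Real.log_exp]
    simp only [hG'] at hGt
    simp only [Real.exp_zero, one_mul, mul_zero, sub_zero] at hGt
    linarith
  nlinarith

end DualIntAux

set_option maxHeartbeats 2000000 in
open DualIntAux in
/-- Suppose `U` additionally satisfies the reasonable
asymptotic elasticity conditions `limsup_{x→+∞} x·U'(x)/U(x) < 1` and
`liminf_{x→−∞} x·U'(x)/U(x) > 1`.  If `ρ` is a random variable with `ρ > 0`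
a.s., `E_P[ρ] = 1` and `E_P[Ũ(ρ)] < ∞`, then `E_P[Ũ(y·ρ)] < ∞` for every
`y > 0`. -/
theorem dual_integrability_for_all_scalings
    (U : ℝ → ℝ)
    (hU_smooth : ContDiff ℝ 1 U)
    (hU_mono : StrictMono U)
    (hU_concave : StrictConcaveOn ℝ Set.univ U)
    (hInada_top : Tendsto (deriv U) atTop (nhds 0))
    (hInada_bot : Tendsto (deriv U) atBot atTop)
    (hAE_top : Filter.limsup (fun x : ℝ => x * deriv U x / U x) atTop < 1)
    (hAE_bot : 1 < Filter.liminf (fun x : ℝ => x * deriv U x / U x) atBot)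
    {Ω : Type*} [MeasurableSpace Ω]
    (P : Measure Ω) [IsProbabilityMeasure P]
    (ρ : Ω → ℝ) (hρ_meas : Measurable ρ)
    (hρ_pos : ∀ᵐ ω ∂P, 0 < ρ ω)
    (hρ_int : Integrable ρ P)
    (hρ_mean : ∫ ω, ρ ω ∂P = 1)
    (hUρ_int : Integrable (fun ω => Utilde U (ρ ω)) P) :
    ∀ y : ℝ, 0 < y → Integrable (fun ω => Utilde U (y * ρ ω)) P := by
  -- basic facts
  have hdiff : ∀ x : ℝ, DifferentiableAt ℝ U x := fun x =>
    (hU_smooth.differentiable one_ne_zero).differentiableAt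
  have hd : ∀ x : ℝ, HasDerivAt U (deriv U x) x := fun x => (hdiff x).hasDerivAt
  have hcont : Continuous U := hU_smooth.continuous
  have hconc : ConcaveOn ℝ Set.univ U := hU_concave.concaveOn
  have hdpos : ∀ x : ℝ, 0 < deriv U x := deriv_pos hU_concave hdiff hInada_top
  have hdanti : AntitoneOn (deriv U) Set.univ := hconc.antitoneOn_deriv (fun x _ => hdiff x)
  have hle_Ut : ∀ {z : ℝ}, 0 < z → ∀ x : ℝ, U x - x * z ≤ Utilde U z :=
    fun hz x => le_Utilde hconc hdiff hInada_top hInada_bot hz x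
  have hU0_le : ∀ {z : ℝ}, 0 < z → U 0 ≤ Utilde U z :=
    fun hz => U0_le_Utilde hconc hdiff hInada_top hInada_bot hz
  have htan : ∀ a x : ℝ, U x ≤ U a + deriv U a * (x - a) := tangent_le hconc hdiff
  -- the key pointwise bound
  have key : ∀ s : ℝ, 0 < s → ∃ A B C : ℝ, 1 ≤ A ∧ 0 ≤ B ∧ 0 ≤ C ∧
      ∀ z : ℝ, 0 < z → Utilde U (s * z) ≤ A * Utilde U z + B * z + C := by
    intro s hs
    rcases le_total s 1 with hs1 | hs1
    · -- small s : use asymptotic elasticity at +∞ (or boundedness of U)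
      by_cases hbdd : BddAbove (Set.range U)
      · obtain ⟨M, hM⟩ := hbdd
        refine ⟨1, 0, max (M - U 0) 0, le_refl 1, le_refl 0, le_max_right _ _, ?_⟩
        intro z hz
        have hsz : 0 < s * z := mul_pos hs hz
        refine ciSup_le fun x => ?_
        have hU0 : U 0 ≤ Utilde U z := hU0_le hz
        rcases le_total x 0 with hx | hx
        · have hxz : x * z ≤ 0 := mul_nonpos_of_nonpos_of_nonneg hx hz.le
          have h1 : U x - x * (s * z) ≤ U x - x * z := by nlinarith
          have h2 := hle_Ut hz x
          have h3 : (0:ℝ) ≤ max (M - U 0) 0 := le_max_right _ _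
          linarith
        · have h1 : U x ≤ M := hM ⟨x, rfl⟩
          have h2 : 0 ≤ x * (s * z) := mul_nonneg hx hsz.le
          have h3 : M - U 0 ≤ max (M - U 0) 0 := le_max_left _ _
          linarith
      · -- U unbounded above : U → ∞ at +∞
        have hTop : Tendsto U atTop atTop := by
          refine tendsto_atTop_atTop_of_monotone hU_mono.monotone fun b => ?_
          obtain ⟨_, ⟨x, rfl⟩, hb⟩ := not_bddAbove_iff.mp hbdd b
          exact ⟨x, hb.le⟩
        have hev1 : ∀ᶠ x in atTop, max 1 |U 0| < U x := hTop.eventually_gt_atTop _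
        have hbound : IsBoundedUnder (· ≤ ·) atTop (fun x : ℝ => x * deriv U x / U x) := by
          refine ⟨2, ?_⟩
          rw [Filter.eventually_map]
          filter_upwards [hev1] with x h1
          have hUx : (0:ℝ) < U x := by
            have := le_max_left (1:ℝ) |U 0|; linarith
          have htx := htan x 0
          have h2 : x * deriv U x ≤ U x - U 0 := by nlinarith
          have h3 : -U 0 ≤ |U 0| := neg_le_abs _
          have h4 : |U 0| < U x := lt_of_le_of_lt (le_max_right _ _) h1
          rw [div_le_iff₀ hUx]
          nlinarith
        set l := Filter.limsup (fun x : ℝ => x * deriv U x / U x) atTop with hl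
        set γ := (max l 0 + 1) / 2 with hγdef
        have hml : max l 0 < 1 := max_lt hAE_top one_pos
        have hγ1 : γ < 1 := by rw [hγdef]; linarith
        have hγ0 : 0 < γ := by
          rw [hγdef]; have : (0:ℝ) ≤ max l 0 := le_max_right _ _; linarith
        have hlγ : l < γ := by
          rw [hγdef]; have : l ≤ max l 0 := le_max_left _ _; linarith
        have hev2 := Filter.eventually_lt_of_limsup_lt hlγ hbound
        obtain ⟨x₀', hx₀'⟩ := eventually_atTop.mp (hev1.and hev2)
        set x₀ := max x₀' 1 with hx₀def
        have hx₀1 : (1:ℝ) ≤ x₀ := le_max_right _ _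
        have hprop : ∀ w, x₀ ≤ w → 0 < U w ∧ w * deriv U w < γ * U w := by
          intro w hw
          have := hx₀' w (le_trans (le_max_left _ _) hw)
          have hUw : 0 < U w := by
            have h := this.1; have h' := le_max_left (1:ℝ) |U 0|; linarith
          refine ⟨hUw, ?_⟩
          have := this.2
          rwa [div_lt_iff₀ hUw] at this
        -- scaling setup
        set t := -(Real.log s) / (1 - γ) with htdef
        have hlogs : Real.log s ≤ 0 := Real.log_nonpos hs.le hs1
        have ht : 0 ≤ t := by
          rw [htdef]; apply div_nonneg (by linarith) (by linarith)
        have hsexp : s = Real.exp (-(1 - γ) * t) := by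
          have : -(1 - γ) * t = Real.log s := by
            have hne : (1:ℝ) - γ ≠ 0 := by linarith
            rw [htdef]; field_simp
          rw [this, Real.exp_log hs]
        set A := Real.exp (γ * t) with hAdef
        have hA : 1 ≤ A := Real.one_le_exp (by positivity)
        set K := Real.exp t * x₀ with hKdef
        refine ⟨A, 0, (A + 1) * |U 0| + max (U K) 0, hA, le_refl 0, by positivity, ?_⟩
        intro z hz
        have hsz : 0 < s * z := mul_pos hs hz
        have hU0 : U 0 ≤ Utilde U z := hU0_le hz
        have hnegabs : -|U 0| ≤ U 0 := neg_abs_le _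
        have hmax0 : (0:ℝ) ≤ max (U K) 0 := le_max_right _ _
        have hAU : A * (-|U 0|) ≤ A * Utilde U z :=
          mul_le_mul_of_nonneg_left (by linarith) (by linarith)
        refine ciSup_le fun x => ?_
        rcases le_total x 0 with hx | hx
        · have hxz : x * z ≤ 0 := mul_nonpos_of_nonpos_of_nonneg hx hz.le
          have h1 : U x - x * (s * z) ≤ U x - x * z := by nlinarith
          have h2 := hle_Ut hz x
          -- Utilde z ≤ A * Utilde z + (A-1)|U 0|
          have h3 : (1 - A) * Utilde U z ≤ (1 - A) * U 0 :=
            mul_le_mul_of_nonpos_left hU0 (by linarith)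
          have h4 : (0:ℝ) ≤ (A - 1) * (|U 0| + U 0) :=
            mul_nonneg (by linarith) (by linarith [neg_le_abs (U 0)])
          linarith [abs_nonneg (U 0)]
        · rcases le_total x K with hxK | hxK
          · have h1 : U x ≤ U K := hU_mono.monotone hxK
            have h2 : 0 ≤ x * (s * z) := mul_nonneg hx hsz.le
            have h3 : U K ≤ max (U K) 0 := le_max_left _ _
            linarith [abs_nonneg (U 0)]
          · -- large x : use the scaling estimate
            set x' := Real.exp (-t) * x with hx'def
            have hKpos : 0 < K := by
              rw [hKdef]; positivity
            have hxx' : x = Real.exp t * x' := by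
              rw [hx'def, ← mul_assoc, ← Real.exp_add]
              simp
            have hx'0 : x₀ ≤ x' := by
              rw [hx'def]
              have h4 : Real.exp (-t) * K ≤ Real.exp (-t) * x :=
                mul_le_mul_of_nonneg_left hxK (Real.exp_pos _).le
              rw [hKdef, ← mul_assoc, ← Real.exp_add] at h4
              simpa using h4
            have hscale := scale_top hd hcont hγ0 (by linarith : (0:ℝ) < x₀)
              (fun w hw => (hprop w hw).1) (fun w hw => (hprop w hw).2) x' hx'0 t ht
            rw [← hxx'] at hscale
            have hterm : x * (s * z) = A * (x' * z) := by
              rw [hxx', hsexp, hAdef]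
              rw [show Real.exp t * x' * (Real.exp (-(1 - γ) * t) * z)
                  = (Real.exp t * Real.exp (-(1 - γ) * t)) * (x' * z) by ring,
                ← Real.exp_add]
              ring_nf
            have h5 : U x' - x' * z ≤ Utilde U z := hle_Ut hz x'
            have h6 : A * (U x' - x' * z) ≤ A * Utilde U z :=
              mul_le_mul_of_nonneg_left h5 (by linarith)
            have hC : (0:ℝ) ≤ (A + 1) * |U 0| + max (U K) 0 := by positivity
            calc U x - x * (s * z) ≤ A * U x' - A * (x' * z) := by
                  rw [hterm] at *; rw [hAdef] at *; linarith [hscale]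
              _ = A * (U x' - x' * z) := by ring
              _ ≤ A * Utilde U z := h6
              _ ≤ A * Utilde U z + 0 * z + ((A + 1) * |U 0| + max (U K) 0) := by linarith
    · -- large s : use asymptotic elasticity at -∞
      -- first find x₁ and γ
      have hbotpkg : ∃ γ x₁ : ℝ, 1 < γ ∧ x₁ ≤ -1 ∧
          ∀ w, w ≤ x₁ → U w < 0 ∧ w * deriv U w < γ * U w := by
        by_cases hneg : ∃ x, U x < 0
        · obtain ⟨b, hb⟩ := hneg
          have hevneg : ∀ᶠ w in atBot, U w < 0 := by
            filter_upwards [eventually_le_atBot b] with w hw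
            exact lt_of_le_of_lt (hU_mono.monotone hw) hb
          have hbound : IsBoundedUnder (· ≥ ·) atBot (fun x : ℝ => x * deriv U x / U x) := by
            refine ⟨0, ?_⟩
            rw [Filter.eventually_map]
            filter_upwards [hevneg, eventually_le_atBot (-1 : ℝ)] with w hUw hw
            have hnum : w * deriv U w < 0 := mul_neg_of_neg_of_pos (by linarith) (hdpos w)
            exact le_of_lt (div_pos_of_neg_of_neg hnum hUw)
          set l := Filter.liminf (fun x : ℝ => x * deriv U x / U x) atBot with hl
          set γ := (1 + l) / 2 with hγdef
          have hγ1 : 1 < γ := by rw [hγdef]; linarith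
          have hγl : γ < l := by rw [hγdef]; linarith
          have hev2 := Filter.eventually_lt_of_lt_liminf hγl hbound
          obtain ⟨x₁', hx₁'⟩ := eventually_atBot.mp (hevneg.and hev2)
          refine ⟨γ, min x₁' (-1), hγ1, min_le_right _ _, ?_⟩
          intro w hw
          have h := hx₁' w (le_trans hw (min_le_left _ _))
          refine ⟨h.1, ?_⟩
          have h2 := h.2
          rwa [lt_div_iff_of_neg h.1] at h2
        · -- U ≥ 0 everywhere : contradiction with hAE_bot
          exfalso
          push_neg at hneg
          have hpos : ∀ x, 0 < U x := by
            intro x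
            rcases lt_or_eq_of_le (hneg x) with h | h
            · exact h
            · exfalso
              have := hU_mono (show x - 1 < x by linarith)
              have := hneg (x - 1)
              linarith
          set d1 := deriv U (-1) with hd1
          set u1 := U (-1) with hu1
          have hd1p : 0 < d1 := hdpos _
          have hu1p : 0 < u1 := hpos _
          have hcomp : ∀ w : ℝ, w ≤ -1 →
              w * deriv U w / U w ≤ w * (d1 / u1) := by
            intro w hw
            have hw0 : w < 0 := by linarith
            have hdw : d1 ≤ deriv U w := hdanti (mem_univ w) (mem_univ (-1)) hw
            have hUw : 0 < U w := hpos w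
            have hUwu1 : U w ≤ u1 := hU_mono.monotone hw
            have h1 : w * deriv U w ≤ w * d1 :=
              mul_le_mul_of_nonpos_left hdw hw0.le
            have h2 : w * deriv U w / U w ≤ w * d1 / U w := by
              gcongr
            have h3 : w * d1 / U w ≤ w * d1 / u1 := by
              rw [div_le_div_iff₀ hUw hu1p]
              have hwd1 : w * d1 ≤ 0 := mul_nonpos_of_nonpos_of_nonneg hw0.le hd1p.le
              nlinarith [hwd1, sub_nonneg.mpr hUwu1]
            calc w * deriv U w / U w ≤ w * d1 / U w := h2
              _ ≤ w * d1 / u1 := h3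
              _ = w * (d1 / u1) := by ring
          have htendsaux : Tendsto (fun w : ℝ => w * (d1 / u1)) atBot atBot := by
            exact Tendsto.atBot_mul_const (div_pos hd1p hu1p) tendsto_id
          have htends : Tendsto (fun x : ℝ => x * deriv U x / U x) atBot atBot := by
            refine tendsto_atBot_mono' atBot ?_ htendsaux
            filter_upwards [eventually_le_atBot (-1 : ℝ)] with w hw
            exact hcomp w hw
          have hempty : {a : ℝ | ∀ᶠ w in atBot, a ≤ (fun x : ℝ => x * deriv U x / U x) w} = ∅ := by
            ext a
            simp only [Set.mem_setOf_eq, Set.mem_empty_iff_false, iff_false]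
            intro ha
            have h1 := htends.eventually_lt_atBot a
            obtain ⟨w, hw1, hw2⟩ := (ha.and h1).exists
            linarith
          rw [Filter.liminf_eq, hempty, Real.sSup_empty] at hAE_bot
          linarith
      obtain ⟨γ, x₁, hγ1, hx₁, hprop⟩ := hbotpkg
      set t := Real.log s / (γ - 1) with htdef
      have hlogs : 0 ≤ Real.log s := Real.log_nonneg hs1
      have ht : 0 ≤ t := div_nonneg hlogs (by linarith)
      have hsexp : s = Real.exp ((γ - 1) * t) := by
        have : (γ - 1) * t = Real.log s := by
          have hne : γ - (1:ℝ) ≠ 0 := by linarith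
          rw [htdef]; field_simp
        rw [this, Real.exp_log hs]
      set A := Real.exp (γ * t) with hAdef
      have hγ0 : (0:ℝ) < γ := by linarith
      have hA : 1 ≤ A := Real.one_le_exp (by positivity)
      set K := Real.exp t * x₁ with hKdef
      have hKneg : K < 0 := mul_neg_of_pos_of_neg (Real.exp_pos _) (by linarith)
      set B := Real.exp t * (-x₁) * s with hBdef
      have hB : 0 ≤ B := by
        rw [hBdef]
        have : (0:ℝ) ≤ -x₁ := by linarith
        positivity
      refine ⟨A, B, (A + 1) * |U 0|, hA, hB, by positivity, ?_⟩
      intro z hz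
      have hsz : 0 < s * z := mul_pos hs hz
      have hU0 : U 0 ≤ Utilde U z := hU0_le hz
      have hnegabs : -|U 0| ≤ U 0 := neg_abs_le _
      have hBz : 0 ≤ B * z := mul_nonneg hB hz.le
      have hAU : A * (-|U 0|) ≤ A * Utilde U z :=
        mul_le_mul_of_nonneg_left (by linarith) (by linarith)
      refine ciSup_le fun x => ?_
      rcases le_total 0 x with hx | hx
      · have hxz : 0 ≤ x * z := mul_nonneg hx hz.le
        have h1 : U x - x * (s * z) ≤ U x - x * z := by nlinarith
        have h2 := hle_Ut hz x
        have h3 : (1 - A) * Utilde U z ≤ (1 - A) * U 0 :=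
          mul_le_mul_of_nonpos_left hU0 (by linarith)
        have h4 : (0:ℝ) ≤ (A - 1) * (|U 0| + U 0) :=
          mul_nonneg (by linarith) (by linarith [neg_le_abs (U 0)])
        linarith [abs_nonneg (U 0)]
      · rcases le_total K x with hKx | hKx
        · -- middle region
          have h1 : U x ≤ U 0 := hU_mono.monotone hx
          have h2 : -(x * (s * z)) ≤ B * z := by
            rw [hBdef]
            have : -x ≤ -K := by linarith
            have hKe : -K = Real.exp t * (-x₁) := by rw [hKdef]; ring
            nlinarith [mul_pos hs hz]
          linarith [le_abs_self (U 0), abs_nonneg (U 0)]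
        · -- far negative region : scaling estimate
          set x' := Real.exp (-t) * x with hx'def
          have hxx' : x = Real.exp t * x' := by
            rw [hx'def, ← mul_assoc, ← Real.exp_add]
            simp
          have hx'1 : x' ≤ x₁ := by
            rw [hx'def]
            have h4 : Real.exp (-t) * x ≤ Real.exp (-t) * K :=
              mul_le_mul_of_nonneg_left hKx (Real.exp_pos _).le
            rw [hKdef, ← mul_assoc, ← Real.exp_add] at h4
            simpa using h4
          have hscale := scale_bot hd (show x₁ < 0 by linarith)
            (fun w hw => (hprop w hw).1) (fun w hw => (hprop w hw).2) x' hx'1 t ht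
          rw [← hxx'] at hscale
          have hterm : x * (s * z) = A * (x' * z) := by
            rw [hxx', hsexp, hAdef]
            rw [show Real.exp t * x' * (Real.exp ((γ - 1) * t) * z)
                = (Real.exp t * Real.exp ((γ - 1) * t)) * (x' * z) by ring,
              ← Real.exp_add]
            ring_nf
          have h5 : U x' - x' * z ≤ Utilde U z := hle_Ut hz x'
          have h6 : A * (U x' - x' * z) ≤ A * Utilde U z :=
            mul_le_mul_of_nonneg_left h5 (by linarith)
          have hC : (0:ℝ) ≤ (A + 1) * |U 0| := by positivity
          calc U x - x * (s * z) ≤ A * U x' - A * (x' * z) := by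
                rw [hterm] at *; rw [hAdef] at *; linarith [hscale]
            _ = A * (U x' - x' * z) := by ring
            _ ≤ A * Utilde U z := h6
            _ ≤ A * Utilde U z + B * z + (A + 1) * |U 0| := by linarith
  -- now integrate
  intro y hy
  obtain ⟨A, B, C, hA, hB, hC, hkey⟩ := key y hy
  -- a.e. measurability via rational suprema
  have hms : Measurable fun ω => ⨆ q : ℚ, (U q - (q : ℝ) * (y * ρ ω)) := by
    refine Measurable.iSup fun q => ?_
    exact measurable_const.sub ((hρ_meas.const_mul y).const_mul (q : ℝ))
  have hae : (fun ω => Utilde U (y * ρ ω)) =ᵐ[P]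
      (fun ω => ⨆ q : ℚ, (U q - (q : ℝ) * (y * ρ ω))) := by
    filter_upwards [hρ_pos] with ω hω
    exact Utilde_rat hcont hconc hdiff hInada_top hInada_bot (mul_pos hy hω)
  have haesm : AEStronglyMeasurable (fun ω => Utilde U (y * ρ ω)) P :=
    (hms.aemeasurable.congr hae.symm).aestronglyMeasurable
  have hg_int : Integrable (fun ω => A * |Utilde U (ρ ω)| + B * ρ ω + (C + |U 0|)) P := by
    exact ((hUρ_int.abs.const_mul A).add (hρ_int.const_mul B)).add (integrable_const _)
  refine hg_int.mono' haesm ?_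
  filter_upwards [hρ_pos] with ω hω
  have h1 := hkey (ρ ω) hω
  have h2 : U 0 ≤ Utilde U (y * ρ ω) := hU0_le (mul_pos hy hω)
  have h3 : Utilde U (ρ ω) ≤ |Utilde U (ρ ω)| := le_abs_self _
  have h4 : A * Utilde U (ρ ω) ≤ A * |Utilde U (ρ ω)| :=
    mul_le_mul_of_nonneg_left h3 (by linarith)
  have h5 : 0 ≤ A * |Utilde U (ρ ω)| := mul_nonneg (by linarith) (abs_nonneg _)
  have h6 : 0 ≤ B * ρ ω := mul_nonneg hB hω.le
  have h7 : -|U 0| ≤ U 0 := neg_abs_le _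
  rw [Real.norm_eq_abs, abs_le]
  constructor
  · linarith [abs_nonneg (U 0)]
  · linarith [abs_nonneg (U 0)]
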